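/- For vector fields u ∈ H^{1,2}_0(O) on an open set O ⊂ ℝ², the L⁴ norm satisfies the Ladyzhenskaya inequality ‖u‖_{L⁴(O)} ≤ 2^{1/4} ‖u‖_{L²(O)}^{1/2} ‖∇u‖_{L²(O)}^{1/2}. -/

import Mathlib

open MeasureTheory

noncomputable abbrev E2 := EuclideanSpace ℝ (Fin 2)

/-- The `L^p(O)` norm of a vector field `u` on `O ⊆ ℝ²`. -/
noncomputable def LpN (O : Set E2) (u : E2 → E2) (p : ℝ) : ℝ :=
  (eLpNorm u (ENNReal.ofReal p) (volume.restrict O)).toReal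

/-- The `L²(O)` norm of the (full) gradient of a vector field `u`. -/
noncomputable def gradN2 (O : Set E2) (u : E2 → E2) : ℝ :=
  (eLpNorm (fun x => fderiv ℝ u x) 2 (volume.restrict O)).toReal

section Aux

open Set Function
open scoped ENNReal NNReal RealInnerProductSpace


lemma oneDIci {f : ℝ → ℝ} (hf : ContDiff ℝ 1 f) (h2f : HasCompactSupport f) (s : ℝ) :
    (‖f s‖₊ : ℝ≥0∞) ≤ ∫⁻ t in Ici s, ‖deriv f t‖₊ := by
  have hg : ContDiff ℝ 1 (fun t => f (-t)) := hf.comp (contDiff_neg)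
  have h2g : HasCompactSupport (fun t => f (-t)) := by
    have : HasCompactSupport (f ∘ (Homeomorph.neg ℝ)) := h2f.comp_homeomorph _
    exact this
  have h1 := h2g.enorm_le_lintegral_Ici_deriv hg (-s)
  simp only [neg_neg] at h1
  have hd : ∀ y, ‖deriv (fun t => f (-t)) y‖₊ = ‖deriv f (-y)‖₊ := by
    intro y; rw [deriv_comp_neg]; simp
  have heq : ∫⁻ t in Iic (-s), (‖deriv f (-t)‖₊ : ℝ≥0∞) = ∫⁻ t in Ici s, ‖deriv f t‖₊ := by
    have hmp : MeasurePreserving (fun t : ℝ => -t) volume volume :=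
      Measure.measurePreserving_neg volume
    have hemb : MeasurableEmbedding (fun t : ℝ => -t) :=
      (Homeomorph.neg ℝ).measurableEmbedding
    have h2 := hmp.setLIntegral_comp_emb hemb (fun t => (‖deriv f t‖₊ : ℝ≥0∞)) (Iic (-s))
    rw [h2]
    have him : (fun t : ℝ => -t) '' Iic (-s) = Ici s := by
      ext t; simp [le_neg]
    rw [him]
  calc (‖f s‖₊ : ℝ≥0∞) ≤ ∫⁻ t in Iic (-s), ‖deriv (fun t => f (-t)) t‖₊ := h1
    _ = ∫⁻ t in Iic (-s), ‖deriv f (-t)‖₊ := by simp_rw [hd]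
    _ = ∫⁻ t in Ici s, ‖deriv f t‖₊ := heq

lemma oneD {f : ℝ → ℝ} (hf : ContDiff ℝ 1 f) (h2f : HasCompactSupport f) (s : ℝ) :
    2 * (‖f s‖₊ : ℝ≥0∞) ≤ ∫⁻ t, ‖deriv f t‖₊ := by
  have hIic := h2f.enorm_le_lintegral_Ici_deriv hf s
  have hIci := oneDIci hf h2f s
  have hIoi : ∫⁻ t in Ici s, (‖deriv f t‖₊ : ℝ≥0∞) = ∫⁻ t in Ioi s, ‖deriv f t‖₊ :=
    (setLIntegral_congr (Ioi_ae_eq_Ici (a := s)).symm)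
  have hsplit : (∫⁻ t in Iic s, (‖deriv f t‖₊ : ℝ≥0∞)) + ∫⁻ t in Ioi s, (‖deriv f t‖₊ : ℝ≥0∞)
      = ∫⁻ t, ‖deriv f t‖₊ := by
    rw [← lintegral_union measurableSet_Ioi (Iic_disjoint_Ioi le_rfl), Iic_union_Ioi,
      Measure.restrict_univ]
  calc 2 * (‖f s‖₊ : ℝ≥0∞) = (‖f s‖₊ : ℝ≥0∞) + ‖f s‖₊ := by ring
    _ ≤ (∫⁻ t in Iic s, ‖deriv f t‖₊) + ∫⁻ t in Ioi s, ‖deriv f t‖₊ :=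
        add_le_add hIic (hIoi ▸ hIci)
    _ = ∫⁻ t, ‖deriv f t‖₊ := hsplit


lemma fub {g : (Fin 2 → ℝ) → ℝ≥0∞} (hg : Measurable g) :
    ∫⁻ x, (∫⁻ t, g (update x 0 t)) * (∫⁻ t, g (update x 1 t))
      = (∫⁻ x, g x) ^ 2 := by
  have ρmp : MeasurePreserving (MeasurableEquiv.piFinTwo (fun _ => ℝ)) volume volume :=
    volume_preserving_piFinTwo _
  set ρ := MeasurableEquiv.piFinTwo (fun _ : Fin 2 => ℝ) with hρ
  have key0 : ∀ (a b t : ℝ), update (ρ.symm (a, b)) 0 t = ρ.symm (t, b) := by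
    intro a b t; funext i; fin_cases i <;> simp [ρ, MeasurableEquiv.piFinTwo, update]
  have key1 : ∀ (a b t : ℝ), update (ρ.symm (a, b)) 1 t = ρ.symm (a, t) := by
    intro a b t; funext i; fin_cases i <;> simp [ρ, MeasurableEquiv.piFinTwo, update]
  set q : ℝ × ℝ → ℝ≥0∞ := fun z => g (ρ.symm z) with hq
  have hqm : Measurable q := hg.comp ρ.symm.measurable
  have hgq : ∫⁻ z, q z = ∫⁻ x, g x := (ρmp.symm ρ).lintegral_comp hg
  have hA : Measurable fun b => ∫⁻ t, q (t, b) :=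
    Measurable.lintegral_prod_left (hqm.comp (measurable_fst.prodMk measurable_snd))
  have hB : Measurable fun a => ∫⁻ t, q (a, t) := Measurable.lintegral_prod_right hqm
  have hAint : ∫⁻ b, (∫⁻ t, q (t, b)) = ∫⁻ z, q z := by
    rw [lintegral_lintegral_swap (f := fun b t => q (t, b))
      (hqm.comp (measurable_snd.prodMk measurable_fst)).aemeasurable]
    rw [Measure.volume_eq_prod, lintegral_prod _ hqm.aemeasurable]
  have hBint : ∫⁻ a, (∫⁻ t, q (a, t)) = ∫⁻ z, q z := by
    rw [Measure.volume_eq_prod, lintegral_prod _ hqm.aemeasurable]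
  -- main transfer
  have hF : Measurable fun x : Fin 2 → ℝ =>
      (∫⁻ t, g (update x 0 t)) * (∫⁻ t, g (update x 1 t)) := by
    apply Measurable.mul
    · apply Measurable.lintegral_prod_left
      exact hg.comp ((measurable_pi_lambda _ (fun i => by
        fin_cases i
        · exact measurable_fst
        · exact (measurable_pi_apply 1).comp measurable_snd)) : Measurable fun p : ℝ × (Fin 2 → ℝ) => update p.2 0 p.1)
    · apply Measurable.lintegral_prod_right (f := fun x t => g (update x 1 t))
      exact hg.comp ((measurable_pi_lambda _ (fun i => by
        fin_cases i
        · exact (measurable_pi_apply 0).comp measurable_fst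
        · exact measurable_snd)) : Measurable fun p : (Fin 2 → ℝ) × ℝ => update p.1 1 p.2)
  calc ∫⁻ x, (∫⁻ t, g (update x 0 t)) * (∫⁻ t, g (update x 1 t))
      = ∫⁻ z : ℝ × ℝ, (∫⁻ t, g (update (ρ.symm z) 0 t)) * (∫⁻ t, g (update (ρ.symm z) 1 t)) :=
        ((ρmp.symm ρ).lintegral_comp hF).symm
    _ = ∫⁻ z : ℝ × ℝ, (∫⁻ t, q (t, z.2)) * (∫⁻ t, q (z.1, t)) := by
        congr 1; funext z
        rw [show z = (z.1, z.2) from rfl]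
        simp only [key0, key1]; rfl
    _ = ∫⁻ a, ∫⁻ b, (∫⁻ t, q (t, b)) * (∫⁻ t, q (a, t)) := by
        rw [Measure.volume_eq_prod, lintegral_prod]
        exact ((hA.comp measurable_snd).mul (hB.comp measurable_fst)).aemeasurable
    _ = ∫⁻ a, (∫⁻ b, (∫⁻ t, q (t, b))) * (∫⁻ t, q (a, t)) := by
        congr 1; funext a
        rw [lintegral_mul_const _ hA]
    _ = (∫⁻ z, q z) * ∫⁻ a, (∫⁻ t, q (a, t)) := by
        rw [hAint, lintegral_const_mul _ hB]
    _ = (∫⁻ x, g x) ^ 2 := by rw [hBint, hgq]; ring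


noncomputable def e2 : (Fin 2 → ℝ) ≃L[ℝ] E2 := (EuclideanSpace.equiv (Fin 2) ℝ).symm

lemma curve_props {u : E2 → E2} (hu : ContDiff ℝ 1 u) (hcpt : HasCompactSupport u)
    (x : Fin 2 → ℝ) (i : Fin 2) :
    ContDiff ℝ 1 (fun t : ℝ => ‖u (e2 (update x i t))‖ ^ 2) ∧
    HasCompactSupport (fun t : ℝ => ‖u (e2 (update x i t))‖ ^ 2) ∧
    ∀ t : ℝ, (‖deriv (fun t : ℝ => ‖u (e2 (update x i t))‖ ^ 2) t‖₊ : ℝ≥0∞)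
      ≤ 2 * ‖u (e2 (update x i t))‖₊ * ‖fderiv ℝ u (e2 (update x i t))‖₊ := by
  have hupd : ContDiff ℝ 1 (fun t : ℝ => update x i t) := contDiff_update 1 x i
  have hc : ContDiff ℝ 1 (fun t : ℝ => e2 (update x i t)) :=
    e2.contDiff.comp hupd
  have hk : ContDiff ℝ 1 (fun t : ℝ => u (e2 (update x i t))) := hu.comp hc
  refine ⟨hk.norm_sq ℝ, ?_, ?_⟩
  · have h1 : HasCompactSupport (fun t : ℝ => u (e2 (update x i t))) := by
      have h2 : HasCompactSupport (u ∘ e2) := hcpt.comp_homeomorph e2.toHomeomorph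
      exact h2.comp_isClosedEmbedding (isClosedEmbedding_update x i)
    have := h1.comp_left (g := fun y : E2 => ‖y‖ ^ 2) (by simp)
    exact this
  · intro t
    set z := e2 (update x i t) with hz
    have hder : HasDerivAt (fun t : ℝ => e2 (update x i t)) (e2 (Pi.single i 1)) t :=
      e2.toContinuousLinearMap.hasFDerivAt.comp_hasDerivAt t (hasDerivAt_update x i t)
    have hku : HasDerivAt (fun t : ℝ => u (e2 (update x i t)))
        (fderiv ℝ u z (e2 (Pi.single i 1))) t :=
      (hu.differentiable (by norm_num) z).hasFDerivAt.comp_hasDerivAt t hder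
    have hinner : HasDerivAt (fun t : ℝ => ⟪u (e2 (update x i t)), u (e2 (update x i t))⟫)
        (⟪u z, fderiv ℝ u z (e2 (Pi.single i 1))⟫ + ⟪fderiv ℝ u z (e2 (Pi.single i 1)), u z⟫) t :=
      hku.inner ℝ hku
    have hfd : HasDerivAt (fun t : ℝ => ‖u (e2 (update x i t))‖ ^ 2)
        (⟪u z, fderiv ℝ u z (e2 (Pi.single i 1))⟫ + ⟪fderiv ℝ u z (e2 (Pi.single i 1)), u z⟫) t := by
      convert hinner using 2 with s
      exact (real_inner_self_eq_norm_sq _).symm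
    rw [hfd.deriv]
    have hnorm1 : ‖e2 (Pi.single i 1)‖ = 1 := by
      have : e2 (Pi.single i 1) = EuclideanSpace.single i (1:ℝ) := rfl
      rw [this, EuclideanSpace.norm_single]; norm_num
    have hb : ‖⟪u z, fderiv ℝ u z (e2 (Pi.single i 1))⟫ + ⟪fderiv ℝ u z (e2 (Pi.single i 1)), u z⟫‖
        ≤ 2 * ‖u z‖ * ‖fderiv ℝ u z‖ := by
      have h1 : ‖fderiv ℝ u z (e2 (Pi.single i 1))‖ ≤ ‖fderiv ℝ u z‖ := by
        calc ‖fderiv ℝ u z (e2 (Pi.single i 1))‖ ≤ ‖fderiv ℝ u z‖ * ‖e2 (Pi.single i 1)‖ :=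
              (fderiv ℝ u z).le_opNorm _
          _ = ‖fderiv ℝ u z‖ := by rw [hnorm1, mul_one]
      calc ‖⟪u z, fderiv ℝ u z (e2 (Pi.single i 1))⟫ + ⟪fderiv ℝ u z (e2 (Pi.single i 1)), u z⟫‖
          ≤ ‖⟪u z, fderiv ℝ u z (e2 (Pi.single i 1))⟫‖ + ‖⟪fderiv ℝ u z (e2 (Pi.single i 1)), u z⟫‖ :=
            norm_add_le _ _
        _ ≤ ‖u z‖ * ‖fderiv ℝ u z (e2 (Pi.single i 1))‖ + ‖fderiv ℝ u z (e2 (Pi.single i 1))‖ * ‖u z‖ :=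
            add_le_add (norm_inner_le_norm _ _) (norm_inner_le_norm _ _)
        _ ≤ ‖u z‖ * ‖fderiv ℝ u z‖ + ‖fderiv ℝ u z‖ * ‖u z‖ := by
            gcongr
        _ = 2 * ‖u z‖ * ‖fderiv ℝ u z‖ := by ring
    have : (‖⟪u z, fderiv ℝ u z (e2 (Pi.single i 1))⟫ +
        ⟪fderiv ℝ u z (e2 (Pi.single i 1)), u z⟫‖₊ : ℝ≥0∞)
        ≤ 2 * ‖u z‖₊ * ‖fderiv ℝ u z‖₊ := by
      have h2 : (2 : ℝ≥0∞) * ‖u z‖₊ * ‖fderiv ℝ u z‖₊ = ((2 * ‖u z‖₊ * ‖fderiv ℝ u z‖₊ : ℝ≥0) : ℝ≥0∞) := by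
        push_cast; ring
      rw [h2]
      exact_mod_cast (by exact_mod_cast hb : ‖⟪u z, fderiv ℝ u z (e2 (Pi.single i 1))⟫ +
        ⟪fderiv ℝ u z (e2 (Pi.single i 1)), u z⟫‖₊ ≤ (2 * ‖u z‖₊ * ‖fderiv ℝ u z‖₊ : ℝ≥0))
    exact this



lemma core {u : E2 → E2} (hu : ContDiff ℝ 1 u) (hcpt : HasCompactSupport u) :
    ∫⁻ z, (‖u z‖₊ : ℝ≥0∞) ^ (4 : ℝ)
      ≤ (∫⁻ z, (‖u z‖₊ : ℝ≥0∞) ^ (2 : ℝ)) * ∫⁻ z, (‖fderiv ℝ u z‖₊ : ℝ≥0∞) ^ (2 : ℝ) := by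
  have hum : Measurable u := hu.continuous.measurable
  have hfdm : Measurable (fun z => fderiv ℝ u z) := (hu.continuous_fderiv (by norm_num)).measurable
  -- transfer to the pi type
  have mp : MeasurePreserving ((MeasurableEquiv.toLp 2 (Fin 2 → ℝ)).symm) volume volume :=
    EuclideanSpace.volume_preserving_symm_measurableEquiv_toLp (Fin 2)
  have mps : MeasurePreserving (⇑((MeasurableEquiv.toLp 2 (Fin 2 → ℝ)).symm).symm)
      volume volume := mp.symm _
  have he2 : ∀ x : Fin 2 → ℝ, e2 x = ((MeasurableEquiv.toLp 2 (Fin 2 → ℝ)).symm).symm x :=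
    fun _ => rfl
  have transfer : ∀ (F : E2 → ℝ≥0∞), Measurable F → ∫⁻ x, F (e2 x) = ∫⁻ z, F z := by
    intro F hF
    simp_rw [he2]
    exact mps.lintegral_comp hF
  set g : (Fin 2 → ℝ) → ℝ≥0∞ :=
    fun x => 2 * ‖u (e2 x)‖₊ * ‖fderiv ℝ u (e2 x)‖₊ with hg
  have hgm : Measurable g := by
    apply Measurable.mul (f := fun x => 2 * (‖u (e2 x)‖₊ : ℝ≥0∞)) (g := fun x => (‖fderiv ℝ u (e2 x)‖₊ : ℝ≥0∞))
    · exact (measurable_const.mul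
        ((hum.comp (e2.continuous.measurable)).nnnorm.coe_nnreal_ennreal))
    · exact (hfdm.comp (e2.continuous.measurable)).nnnorm.coe_nnreal_ennreal
  -- pointwise bound
  have key : ∀ (x : Fin 2 → ℝ) (i : Fin 2),
      2 * (‖u (e2 x)‖₊ : ℝ≥0∞) ^ (2 : ℝ) ≤ ∫⁻ t, g (update x i t) := by
    intro x i
    obtain ⟨h1, h2, h3⟩ := curve_props hu hcpt x i
    have := oneD h1 h2 (x i)
    rw [update_eq_self i x] at this
    have hl : (‖(‖u (e2 x)‖ ^ 2 : ℝ)‖₊ : ℝ≥0∞) = (‖u (e2 x)‖₊ : ℝ≥0∞) ^ (2 : ℝ) := by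
      rw [← Real.rpow_natCast (‖u (e2 x)‖) 2]
      push_cast
      rw [← ENNReal.coe_rpow_of_nonneg _ (by norm_num : (0:ℝ) ≤ 2)]
      congr 1
      ext
      simp [Real.nnnorm_rpow_of_nonneg (norm_nonneg _), nnnorm_norm]
    calc 2 * (‖u (e2 x)‖₊ : ℝ≥0∞) ^ (2 : ℝ)
        = 2 * (‖(‖u (e2 x)‖ ^ 2 : ℝ)‖₊ : ℝ≥0∞) := by rw [hl]
      _ ≤ ∫⁻ t, ‖deriv (fun t => ‖u (e2 (update x i t))‖ ^ 2) t‖₊ := this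
      _ ≤ ∫⁻ t, g (update x i t) := lintegral_mono fun t => h3 t
  -- main chain
  have main : 4 * ∫⁻ x, (‖u (e2 x)‖₊ : ℝ≥0∞) ^ (4 : ℝ) ≤ (∫⁻ x, g x) ^ 2 := by
    have step1 : ∀ x : Fin 2 → ℝ, 4 * (‖u (e2 x)‖₊ : ℝ≥0∞) ^ (4 : ℝ)
        ≤ (∫⁻ t, g (update x 0 t)) * (∫⁻ t, g (update x 1 t)) := by
      intro x
      have h4 : 4 * (‖u (e2 x)‖₊ : ℝ≥0∞) ^ (4 : ℝ)
          = (2 * (‖u (e2 x)‖₊ : ℝ≥0∞) ^ (2 : ℝ)) * (2 * (‖u (e2 x)‖₊ : ℝ≥0∞) ^ (2 : ℝ)) := by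
        rw [show (4:ℝ) = 2 + 2 by norm_num, ENNReal.rpow_add_of_nonneg _ _ (by norm_num) (by norm_num)]
        ring
      rw [h4]
      exact mul_le_mul' (key x 0) (key x 1)
    calc 4 * ∫⁻ x, (‖u (e2 x)‖₊ : ℝ≥0∞) ^ (4 : ℝ)
        = ∫⁻ x, 4 * (‖u (e2 x)‖₊ : ℝ≥0∞) ^ (4 : ℝ) := by
          rw [lintegral_const_mul]
          exact ((hum.comp e2.continuous.measurable).nnnorm.coe_nnreal_ennreal).pow_const _
      _ ≤ ∫⁻ x, (∫⁻ t, g (update x 0 t)) * (∫⁻ t, g (update x 1 t)) :=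
          lintegral_mono step1
      _ = (∫⁻ x, g x) ^ 2 := fub hgm
  -- Hoelder
  have holder : ∫⁻ x, g x ≤ 2 * ((∫⁻ x, (‖u (e2 x)‖₊ : ℝ≥0∞) ^ (2:ℝ)) ^ (1/2 : ℝ)
      * (∫⁻ x, (‖fderiv ℝ u (e2 x)‖₊ : ℝ≥0∞) ^ (2:ℝ)) ^ (1/2 : ℝ)) := by
    have hconj : Real.HolderConjugate 2 2 := by constructor <;> norm_num
    have := ENNReal.lintegral_mul_le_Lp_mul_Lq (volume : Measure (Fin 2 → ℝ)) hconj
      (f := fun x => (‖u (e2 x)‖₊ : ℝ≥0∞)) (g := fun x => (‖fderiv ℝ u (e2 x)‖₊ : ℝ≥0∞))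
      ((hum.comp e2.continuous.measurable).nnnorm.coe_nnreal_ennreal).aemeasurable
      ((hfdm.comp e2.continuous.measurable).nnnorm.coe_nnreal_ennreal).aemeasurable
    calc ∫⁻ x, g x = 2 * ∫⁻ x, (‖u (e2 x)‖₊ : ℝ≥0∞) * ‖fderiv ℝ u (e2 x)‖₊ := by
          rw [← lintegral_const_mul]
          · simp_rw [hg, mul_assoc]
          · exact ((hum.comp e2.continuous.measurable).nnnorm.coe_nnreal_ennreal).mul
              ((hfdm.comp e2.continuous.measurable).nnnorm.coe_nnreal_ennreal)
      _ ≤ 2 * ((∫⁻ x, (‖u (e2 x)‖₊ : ℝ≥0∞) ^ (2:ℝ)) ^ (1/2 : ℝ)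
          * (∫⁻ x, (‖fderiv ℝ u (e2 x)‖₊ : ℝ≥0∞) ^ (2:ℝ)) ^ (1/2 : ℝ)) := by
          gcongr
          exact this
  -- combine
  set B := ∫⁻ x, (‖u (e2 x)‖₊ : ℝ≥0∞) ^ (2:ℝ) with hB
  set C := ∫⁻ x, (‖fderiv ℝ u (e2 x)‖₊ : ℝ≥0∞) ^ (2:ℝ) with hC
  have hBC : (2 * (B ^ (1/2:ℝ) * C ^ (1/2:ℝ))) ^ 2 = 4 * (B * C) := by
    rw [mul_pow, mul_pow, ← ENNReal.rpow_natCast (B ^ (1/2:ℝ)) 2,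
      ← ENNReal.rpow_natCast (C ^ (1/2:ℝ)) 2, ← ENNReal.rpow_mul, ← ENNReal.rpow_mul]
    norm_num
  have main2 : 4 * ∫⁻ x, (‖u (e2 x)‖₊ : ℝ≥0∞) ^ (4 : ℝ) ≤ 4 * (B * C) := by
    calc 4 * ∫⁻ x, (‖u (e2 x)‖₊ : ℝ≥0∞) ^ (4 : ℝ) ≤ (∫⁻ x, g x) ^ 2 := main
      _ ≤ (2 * (B ^ (1/2:ℝ) * C ^ (1/2:ℝ))) ^ 2 := by gcongr
      _ = 4 * (B * C) := hBC
  have main3 : ∫⁻ x, (‖u (e2 x)‖₊ : ℝ≥0∞) ^ (4 : ℝ) ≤ B * C :=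
    (ENNReal.mul_le_mul_iff_right (by norm_num) (by norm_num)).mp main2
  -- transfer back
  have t4 : ∫⁻ x, (‖u (e2 x)‖₊ : ℝ≥0∞) ^ (4 : ℝ) = ∫⁻ z, (‖u z‖₊ : ℝ≥0∞) ^ (4 : ℝ) :=
    transfer _ (hum.nnnorm.coe_nnreal_ennreal.pow_const _)
  have t2 : B = ∫⁻ z, (‖u z‖₊ : ℝ≥0∞) ^ (2 : ℝ) :=
    transfer _ (hum.nnnorm.coe_nnreal_ennreal.pow_const _)
  have t2' : C = ∫⁻ z, (‖fderiv ℝ u z‖₊ : ℝ≥0∞) ^ (2 : ℝ) :=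
    transfer _ (hfdm.nnnorm.coe_nnreal_ennreal.pow_const _)
  rw [← t4, ← t2, ← t2']
  exact main3

end Aux

open Set Function
open scoped ENNReal NNReal

/-- **Ladyzhenskaya's inequality** on an open set `O ⊆ ℝ²`: for vector fields
`u ∈ H^{1,2}_0(O)` (here represented by `C¹` fields with compact support in `O`),
`‖u‖_{L⁴(O)} ≤ 2^{1/4} ‖u‖_{L²(O)}^{1/2} ‖∇u‖_{L²(O)}^{1/2}`. -/
theorem ladyzhenskaya_inequality
    (O : Set E2) (hO : IsOpen O)
    (u : E2 → E2) (hu : ContDiff ℝ 1 u)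
    (hcpt : HasCompactSupport u) (hsupp : tsupport u ⊆ O) :
    LpN O u 4 ≤ (2 : ℝ) ^ ((1:ℝ)/4) * (LpN O u 2) ^ ((1:ℝ)/2) * (gradN2 O u) ^ ((1:ℝ)/2) := by
  have husupp : support u ⊆ O := subset_trans (subset_tsupport u) hsupp
  have hfsupp : support (fderiv ℝ u) ⊆ O :=
    subset_trans (support_fderiv_subset ℝ) hsupp
  set A := ∫⁻ z, (‖u z‖₊ : ℝ≥0∞) ^ (4 : ℝ) with hA
  set B := ∫⁻ z, (‖u z‖₊ : ℝ≥0∞) ^ (2 : ℝ) with hB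
  set C := ∫⁻ z, (‖fderiv ℝ u z‖₊ : ℝ≥0∞) ^ (2 : ℝ) with hC
  have hABC : A ≤ B * C := core hu hcpt
  -- identify norms
  have h4 : eLpNorm u (4 : ℝ≥0∞) (volume : Measure E2) = A ^ ((1:ℝ)/4) := by
    rw [eLpNorm_eq_lintegral_rpow_enorm_toReal (by norm_num) (by norm_num), hA]
    norm_num
    rfl
  have h2 : eLpNorm u (2 : ℝ≥0∞) (volume : Measure E2) = B ^ ((1:ℝ)/2) := by
    rw [eLpNorm_eq_lintegral_rpow_enorm_toReal (by norm_num) (by norm_num)]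
    rw [hB]
    norm_num
    rfl
  have h2' : eLpNorm (fun x => fderiv ℝ u x) (2 : ℝ≥0∞) (volume : Measure E2)
      = C ^ ((1:ℝ)/2) := by
    rw [eLpNorm_eq_lintegral_rpow_enorm_toReal (by norm_num) (by norm_num)]
    rw [hC]
    norm_num
    rfl
  -- restriction equalities
  have r4 : LpN O u 4 = (A ^ ((1:ℝ)/4)).toReal := by
    rw [LpN, show ENNReal.ofReal (4:ℝ) = (4:ℝ≥0∞) by norm_num,
      eLpNorm_restrict_eq_of_support_subset husupp, h4]
  have r2 : LpN O u 2 = (B ^ ((1:ℝ)/2)).toReal := by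
    rw [LpN, show ENNReal.ofReal (2:ℝ) = (2:ℝ≥0∞) by norm_num,
      eLpNorm_restrict_eq_of_support_subset husupp, h2]
  have r2' : gradN2 O u = (C ^ ((1:ℝ)/2)).toReal := by
    rw [gradN2, eLpNorm_restrict_eq_of_support_subset (f := fun x => fderiv ℝ u x) hfsupp, h2']
  -- finiteness
  have hBfin : B ≠ ∞ := by
    have hm : MemLp u 2 (volume : Measure E2) :=
      hu.continuous.memLp_of_hasCompactSupport hcpt
    have := hm.eLpNorm_lt_top
    rw [h2] at this
    have := (ENNReal.rpow_lt_top_iff_of_pos (by norm_num : (0:ℝ) < 1/2)).mp this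
    exact this.ne
  have hCfin : C ≠ ∞ := by
    have hm : MemLp (fun x => fderiv ℝ u x) 2 (volume : Measure E2) :=
      (hu.continuous_fderiv (by norm_num)).memLp_of_hasCompactSupport (hcpt.fderiv ℝ)
    have := hm.eLpNorm_lt_top
    rw [h2'] at this
    have := (ENNReal.rpow_lt_top_iff_of_pos (by norm_num : (0:ℝ) < 1/2)).mp this
    exact this.ne
  -- real-number estimate
  have hAr : A.toReal ≤ B.toReal * C.toReal := by
    rw [← ENNReal.toReal_mul]
    exact ENNReal.toReal_mono (ENNReal.mul_ne_top hBfin hCfin) hABC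
  have hBr : (0:ℝ) ≤ B.toReal := ENNReal.toReal_nonneg
  have hCr : (0:ℝ) ≤ C.toReal := ENNReal.toReal_nonneg
  rw [r4, r2, r2', ← ENNReal.toReal_rpow, ← ENNReal.toReal_rpow, ← ENNReal.toReal_rpow]
  calc A.toReal ^ ((1:ℝ)/4)
      ≤ (B.toReal * C.toReal) ^ ((1:ℝ)/4) := by
        apply Real.rpow_le_rpow ENNReal.toReal_nonneg hAr (by norm_num)
    _ = B.toReal ^ ((1:ℝ)/4) * C.toReal ^ ((1:ℝ)/4) := Real.mul_rpow hBr hCr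
    _ = (B.toReal ^ ((1:ℝ)/2)) ^ ((1:ℝ)/2) * (C.toReal ^ ((1:ℝ)/2)) ^ ((1:ℝ)/2) := by
        rw [← Real.rpow_mul hBr, ← Real.rpow_mul hCr]; norm_num
    _ ≤ (2:ℝ) ^ ((1:ℝ)/4) * (B.toReal ^ ((1:ℝ)/2)) ^ ((1:ℝ)/2)
        * (C.toReal ^ ((1:ℝ)/2)) ^ ((1:ℝ)/2) := by
        have h1 : (1:ℝ) ≤ (2:ℝ) ^ ((1:ℝ)/4) :=
          Real.one_le_rpow (by norm_num) (by norm_num)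
        have hxy : (0:ℝ) ≤ (B.toReal ^ ((1:ℝ)/2)) ^ ((1:ℝ)/2) * (C.toReal ^ ((1:ℝ)/2)) ^ ((1:ℝ)/2) :=
          mul_nonneg (Real.rpow_nonneg (Real.rpow_nonneg hBr _) _)
            (Real.rpow_nonneg (Real.rpow_nonneg hCr _) _)
        rw [mul_assoc]
        exact le_mul_of_one_le_left hxy h1
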